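/- Let D ≥ 1, Δ ≥ 1 and ε > 0 be real numbers, let J_1 ≥ 1 be an integer, and let (C_j)_{j≥1} be a nonincreasing sequence of nonnegative real numbers such that C_{J_1+1} ≤ ε·D and C_{j+1} ≤ C_j − ε/(j·Δ) for every j ≥ J_1 with C_j > ε. Then there exists an integer J ≤ J_1·e^{Δ·D} with C_{J+1} ≤ ε. -/

import Mathlib

open Classical

/-- Binary decision trees over inputs in `Fin n → Bool`, with leaf labels in `L`.
A *bare tree* is a `DTree n Unit`; a labeled decision tree is a `DTree n Bool`
(`true` encoding `+1` and `false` encoding `-1`). -/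
inductive DTree (n : ℕ) (L : Type) : Type
  | leaf (label : L) : DTree n L
  | node (i : Fin n) (t0 t1 : DTree n L) : DTree n L

namespace DTree

variable {n : ℕ} {L : Type}

/-- The sequence of branching directions taken by the input `x` (root-to-leaf path). -/
def follow : DTree n L → (Fin n → Bool) → List Bool
  | .leaf _, _ => []
  | .node i t0 t1, x => x i :: (if x i then follow t1 x else follow t0 x)

/-- Addresses (root-to-leaf direction sequences) of all leaves of the tree. -/
def leafAddrs : DTree n L → List (List Bool)
  | .leaf _ => [[]]
  | .node _ t0 t1 =>
      (leafAddrs t0).map (fun s => false :: s) ++ (leafAddrs t1).map (fun s => true :: s)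

/-- Addresses of all internal nodes, together with the coordinate queried there. -/
def internals : DTree n L → List (List Bool × Fin n)
  | .leaf _ => []
  | .node i t0 t1 =>
      ([], i) :: ((internals t0).map (fun vj => (false :: vj.1, vj.2)) ++
        (internals t1).map (fun vj => (true :: vj.1, vj.2)))

/-- Addresses of all nodes (internal nodes and leaves). -/
def allAddrs : DTree n L → List (List Bool)
  | .leaf _ => [[]]
  | .node _ t0 t1 =>
      [] :: ((allAddrs t0).map (fun s => false :: s) ++ (allAddrs t1).map (fun s => true :: s))

/-- The coordinates queried along the path with direction sequence `s`. -/
def pathCoords : DTree n L → List Bool → List (Fin n)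
  | .leaf _, _ => []
  | .node _ _ _, [] => []
  | .node i t0 t1, b :: bs => i :: (if b then pathCoords t1 bs else pathCoords t0 bs)

/-- The substitution that fixes each coordinate queried along the path `s`
to the corresponding direction value. -/
def pathSubst : DTree n L → List Bool → (Fin n → Bool) → (Fin n → Bool)
  | .leaf _, _, x => x
  | .node _ _ _, [], x => x
  | .node i t0 t1, b :: bs, x =>
      if b then pathSubst t1 bs (Function.update x i true)
      else pathSubst t0 bs (Function.update x i false)

/-- Depth: maximum leaf depth. -/
def depth : DTree n L → ℕ
  | .leaf _ => 0
  | .node _ t0 t1 => max (depth t0) (depth t1) + 1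

/-- Evaluation of a labeled tree: the label of the leaf reached by `x`. -/
def eval : DTree n L → (Fin n → Bool) → L
  | .leaf b, _ => b
  | .node i t0 t1, x => if x i then eval t1 x else eval t0 x

/-- Replace the leaf at address `s` by an internal node querying coordinate `i`
(whose two children are leaves). -/
def splitAt : DTree n L → List Bool → Fin n → DTree n L
  | .leaf l, [], i => .node i (.leaf l) (.leaf l)
  | .leaf l, _ :: _, _ => .leaf l
  | .node j t0 t1, [], _ => .node j t0 t1
  | .node j t0 t1, b :: bs, i =>
      if b then .node j t0 (splitAt t1 bs i) else .node j (splitAt t0 bs i) t1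

/-- No coordinate is queried more than once on any root-to-leaf path. -/
def noRepeat : DTree n L → Prop
  | .leaf _ => True
  | .node i t0 t1 =>
      i ∉ (internals t0).map Prod.snd ∧ i ∉ (internals t1).map Prod.snd ∧
        noRepeat t0 ∧ noRepeat t1

end DTree

/-- The probability mass of the point `x` under the product distribution on
`Fin n → Bool` in which coordinate `i` equals `true` with probability `p i`. -/
noncomputable def prMass {n : ℕ} (p : Fin n → ℝ) (x : Fin n → Bool) : ℝ :=
  ∏ i, if x i then p i else 1 - p i

open Classical in
/-- The probability of the event `E` under the product distribution with biases `p`. -/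
noncomputable def prEvent {n : ℕ} (p : Fin n → ℝ) (E : (Fin n → Bool) → Prop) : ℝ :=
  ∑ x : Fin n → Bool, if E x then prMass p x else 0

/-- The influence of coordinate `i` on `f` under the product distribution with biases `p`:
`Pr[f x ≠ f x⁽ⁱ⁾]` where `x⁽ⁱ⁾` re-randomizes the `i`-th coordinate of `x`. -/
noncomputable def infl {n : ℕ} (p : Fin n → ℝ) (i : Fin n) (f : (Fin n → Bool) → Bool) : ℝ :=
  ∑ x : Fin n → Bool, prMass p x *
    ((if f x ≠ f (Function.update x i true) then p i else 0) +
     (if f x ≠ f (Function.update x i false) then 1 - p i else 0))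

/-- Total influence: the sum of the coordinate influences. -/
noncomputable def totalInf {n : ℕ} (p : Fin n → ℝ) (f : (Fin n → Bool) → Bool) : ℝ :=
  ∑ i, infl p i f

/-- Maximum coordinate influence. -/
noncomputable def maxInf {n : ℕ} (p : Fin n → ℝ) (f : (Fin n → Bool) → Bool) : ℝ :=
  ⨆ i : Fin n, infl p i f

/-- Expectation of the `±1` value of `f` (with `true ↦ 1`, `false ↦ -1`). -/
noncomputable def expVal {n : ℕ} (p : Fin n → ℝ) (f : (Fin n → Bool) → Bool) : ℝ :=
  ∑ x : Fin n → Bool, prMass p x * (if f x then 1 else -1)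

/-- Variance of the `±1`-valued function `f`: `1 - E[f]²`. -/
noncomputable def varOf {n : ℕ} (p : Fin n → ℝ) (f : (Fin n → Bool) → Bool) : ℝ :=
  1 - (expVal p f) ^ 2

/-- `error(f, ±1)`: the minority-value probability of `f`. -/
noncomputable def errOf {n : ℕ} (p : Fin n → ℝ) (f : (Fin n → Bool) → Bool) : ℝ :=
  min (prEvent p (fun x => f x = false)) (prEvent p (fun x => f x = true))

/-- `p_v` for a leaf `v` with address `s`: the probability that a random input reaches it. -/
noncomputable def reachLeaf {n : ℕ} {L : Type} (p : Fin n → ℝ) (T : DTree n L)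
    (s : List Bool) : ℝ :=
  prEvent p (fun x => T.follow x = s)

/-- `p_v` for an arbitrary node `v` with address `s`. -/
noncomputable def reachNode {n : ℕ} {L : Type} (p : Fin n → ℝ) (T : DTree n L)
    (s : List Bool) : ℝ :=
  prEvent p (fun x => s <+: T.follow x)

/-- The subfunction `f_v` at the node of `T` with address `s`: `f` with the
coordinates queried on the path to `v` fixed to their path values. -/
def subFun {n : ℕ} {L : Type} (f : (Fin n → Bool) → Bool) (T : DTree n L)
    (s : List Bool) : (Fin n → Bool) → Bool :=
  fun x => f (T.pathSubst s x)

/-- Average depth `Δ(T) = Σ_{leaves v} p_v · depth(v)`. -/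
noncomputable def avgDepth {n : ℕ} {L : Type} (p : Fin n → ℝ) (T : DTree n L) : ℝ :=
  ((T.leafAddrs).map (fun s => reachLeaf p T s * (s.length : ℝ))).sum

/-- `Score(v) = p_v · max_i Inf_i(f_v)` for a leaf `v` with address `s`. -/
noncomputable def score {n : ℕ} {L : Type} (p : Fin n → ℝ) (f : (Fin n → Bool) → Bool)
    (T : DTree n L) (s : List Bool) : ℝ :=
  reachLeaf p T s * maxInf p (subFun f T s)

/-- `cost(T°) = Σ_{leaves v} p_v · Inf(f_v)`. -/
noncomputable def cost {n : ℕ} {L : Type} (p : Fin n → ℝ) (f : (Fin n → Bool) → Bool)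
    (T : DTree n L) : ℝ :=
  ((T.leafAddrs).map (fun s => reachLeaf p T s * totalInf p (subFun f T s))).sum

/-- The error of the `f`-completion of a bare tree:
`error(T°, f) = Σ_{leaves v} p_v · error(f_v, ±1)`. -/
noncomputable def errTree {n : ℕ} {L : Type} (p : Fin n → ℝ) (f : (Fin n → Bool) → Bool)
    (T : DTree n L) : ℝ :=
  ((T.leafAddrs).map (fun s => reachLeaf p T s * errOf p (subFun f T s))).sum

/-- Harmonic sum lower bound: `∑_{j=a}^{b} 1/j ≥ ln((b+1)/a)`. -/
lemma harmonic_log_bound (a : ℕ) (ha : 1 ≤ a) :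
    ∀ b : ℕ, Real.log (b + 1) - Real.log a ≤ ∑ j ∈ Finset.Icc a b, (1 : ℝ) / j := by
  intro b
  induction b with
  | zero =>
      have hab : ¬ (a ≤ 0) := by omega
      rw [Finset.Icc_eq_empty (by omega)]
      simp only [Finset.sum_empty, Nat.cast_zero, zero_add, Real.log_one]
      have : (0:ℝ) ≤ Real.log a := Real.log_nonneg (by exact_mod_cast ha)
      linarith
  | succ b ih =>
      by_cases hab : a ≤ b + 1
      · rw [Finset.sum_Icc_succ_top hab]
        have hstep : Real.log ((b:ℝ) + 1 + 1) - Real.log ((b:ℝ) + 1) ≤ 1 / ((b:ℝ) + 1) := by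
          have hb1 : (0:ℝ) < (b:ℝ) + 1 := by positivity
          have hx : (0:ℝ) < ((b:ℝ) + 1 + 1) / ((b:ℝ) + 1) := by positivity
          have := Real.log_le_sub_one_of_pos hx
          rw [Real.log_div (by positivity) (by positivity)] at this
          have : Real.log ((b:ℝ) + 1 + 1) - Real.log ((b:ℝ) + 1)
              ≤ ((b:ℝ) + 1 + 1) / ((b:ℝ) + 1) - 1 := this
          have heq : ((b:ℝ) + 1 + 1) / ((b:ℝ) + 1) - 1 = 1 / ((b:ℝ) + 1) := by
            field_simp
            ring
          linarith [this, heq.le]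
        push_cast
        push_cast at ih
        linarith
      · rw [Finset.Icc_eq_empty (by omega)]
        simp only [Finset.sum_empty]
        have h1 : ((b:ℝ) + 1 + 1) ≤ (a:ℝ) := by
          have : b + 2 ≤ a := by omega
          exact_mod_cast this
        have := Real.log_le_log (by positivity) h1
        push_cast
        linarith

/-- **Phase 2 recurrence.** Let `D, Δ ≥ 1`, `ε > 0`, `J₁ ≥ 1`, and let
`(C_j)_{j≥1}` be nonincreasing and nonnegative with `C_{J₁+1} ≤ ε·D` and
`C_{j+1} ≤ C_j − ε/(j·Δ)` whenever `j ≥ J₁` and `C_j > ε`. Then there is an integer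
`J ≤ J₁·e^{Δ·D}` with `C_{J+1} ≤ ε`. -/
theorem phase2_recurrence (D Δ ε : ℝ) (hD : 1 ≤ D) (hΔ : 1 ≤ Δ) (hε : 0 < ε)
    (J1 : ℕ) (hJ1 : 1 ≤ J1)
    (C : ℕ → ℝ) (hnonneg : ∀ j, 0 ≤ C j) (hanti : ∀ j, C (j + 1) ≤ C j)
    (hstart : C (J1 + 1) ≤ ε * D)
    (hrec : ∀ j : ℕ, J1 ≤ j → ε < C j → C (j + 1) ≤ C j - ε / ((j : ℝ) * Δ)) :
    ∃ J : ℕ, (J : ℝ) ≤ (J1 : ℝ) * Real.exp (Δ * D) ∧ C (J + 1) ≤ ε := by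
  have hΔ0 : (0:ℝ) < Δ := lt_of_lt_of_le one_pos hΔ
  have hDD : (1:ℝ) ≤ Δ * D := by nlinarith
  set x : ℝ := ((J1 : ℝ) + 1) * Real.exp (Δ * D - 1) with hx
  have hJ1R : (1:ℝ) ≤ (J1:ℝ) := by exact_mod_cast hJ1
  have hxpos : 0 < x := by positivity
  set M : ℕ := ⌈x⌉₊ with hM
  have hM1 : 1 ≤ M := Nat.one_le_iff_ne_zero.mpr (by
    intro h
    have := Nat.ceil_eq_zero.mp h
    linarith)
  have hMx : x ≤ (M:ℝ) := Nat.le_ceil x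
  set N : ℕ := M - 1 with hN
  have hN1 : N + 1 = M := by omega
  have hNcast : ((N:ℝ)) = (M:ℝ) - 1 := by
    have : (N:ℕ) + 1 = M := hN1
    have := congrArg (fun n : ℕ => (n:ℝ)) this
    push_cast at this
    linarith
  -- x ≤ J1 * exp(ΔD)
  have hxle : x ≤ (J1:ℝ) * Real.exp (Δ * D) := by
    have he : Real.exp (Δ * D) = Real.exp (Δ * D - 1) * Real.exp 1 := by
      rw [← Real.exp_add]; ring_nf
    have h2 : (2:ℝ) ≤ Real.exp 1 := by
      have := Real.add_one_le_exp (1:ℝ)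
      linarith
    have hexp : 0 < Real.exp (Δ * D - 1) := Real.exp_pos _
    have h3 : (J1:ℝ) + 1 ≤ (J1:ℝ) * Real.exp 1 := by nlinarith
    rw [hx, he]
    nlinarith [mul_le_mul_of_nonneg_right h3 hexp.le]
  have hNle : (N:ℝ) ≤ (J1:ℝ) * Real.exp (Δ * D) := by
    have hceil : (M:ℝ) < x + 1 := Nat.ceil_lt_add_one hxpos.le
    rw [hNcast]; linarith
  -- J1 ≤ N
  have hJ1N : J1 ≤ N := by
    have hexp1 : (1:ℝ) ≤ Real.exp (Δ * D - 1) := Real.one_le_exp (by linarith)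
    have : ((J1:ℝ) + 1) ≤ x := by
      rw [hx]; nlinarith
    have hJM : ((J1:ℝ) + 1) ≤ (M:ℝ) := le_trans this hMx
    have : J1 + 1 ≤ M := by exact_mod_cast hJM
    omega
  by_contra hcon
  push_neg at hcon
  -- every J ≤ N has ε < C (J+1)
  have hbig : ∀ J : ℕ, J ≤ N → ε < C (J + 1) := by
    intro J hJ
    apply hcon
    exact le_trans (by exact_mod_cast Nat.cast_le.mpr hJ) hNle
  -- key induction
  have key : ∀ k : ℕ, J1 + k ≤ N →
      C (J1 + k + 1) ≤ ε * D - (ε / Δ) * ∑ j ∈ Finset.Icc (J1 + 1) (J1 + k), (1:ℝ) / j := by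
    intro k
    induction k with
    | zero =>
        intro _
        rw [Finset.Icc_eq_empty (by omega)]
        simpa using hstart
    | succ k ih =>
        intro hk
        have hk' : J1 + k ≤ N := by omega
        have ih' := ih hk'
        have hCgt : ε < C (J1 + k + 1) := hbig (J1 + k) hk'
        have hstep := hrec (J1 + k + 1) (by omega) hCgt
        have hsum : ∑ j ∈ Finset.Icc (J1 + 1) (J1 + (k+1)), (1:ℝ) / j
            = (∑ j ∈ Finset.Icc (J1 + 1) (J1 + k), (1:ℝ) / j) + 1 / ((J1:ℝ) + k + 1) := by
          have : J1 + (k + 1) = (J1 + k) + 1 := by omega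
          rw [this, Finset.sum_Icc_succ_top (by omega)]
          push_cast
          ring_nf
        have hdiv : ε / (((J1 + k + 1 : ℕ) : ℝ) * Δ) = (ε / Δ) * (1 / ((J1:ℝ) + k + 1)) := by
          push_cast
          field_simp
        have : C (J1 + (k+1) + 1) ≤ C (J1 + k + 1) - (ε / Δ) * (1 / ((J1:ℝ) + k + 1)) := by
          have heq : J1 + (k+1) + 1 = (J1 + k + 1) + 1 := by omega
          rw [heq]
          calc C ((J1 + k + 1) + 1) ≤ C (J1 + k + 1) - ε / (((J1 + k + 1 : ℕ) : ℝ) * Δ) := hstep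
            _ = C (J1 + k + 1) - (ε / Δ) * (1 / ((J1:ℝ) + k + 1)) := by rw [hdiv]
        rw [hsum]
        linarith
  -- apply at k = N - J1
  have hfin := key (N - J1) (by omega)
  have hNe : J1 + (N - J1) = N := by omega
  rw [hNe] at hfin
  -- harmonic bound
  have hharm := harmonic_log_bound (J1 + 1) (by omega) N
  have hlogM : Real.log ((N:ℝ) + 1) ≥ Real.log ((J1:ℝ) + 1) + (Δ * D - 1) := by
    have h1 : ((N:ℝ) + 1) = (M:ℝ) := by rw [hNcast]; ring
    have h2 : Real.log x = Real.log ((J1:ℝ) + 1) + (Δ * D - 1) := by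
      rw [hx, Real.log_mul (by positivity) (Real.exp_pos _).ne', Real.log_exp]
    rw [h1, ← h2]
    exact Real.log_le_log hxpos hMx
  have hS : Δ * D - 1 ≤ ∑ j ∈ Finset.Icc (J1 + 1) N, (1:ℝ) / j := by
    have : Real.log ((N:ℝ) + 1) - Real.log ((J1:ℝ) + 1)
        ≤ ∑ j ∈ Finset.Icc (J1 + 1) N, (1:ℝ) / j := by
      have := hharm
      push_cast at this
      linarith
    linarith
  have hεΔ : 0 ≤ ε / Δ := by positivity
  have hmul : (ε / Δ) * (Δ * D - 1) ≤ (ε / Δ) * ∑ j ∈ Finset.Icc (J1 + 1) N, (1:ℝ) / j :=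
    mul_le_mul_of_nonneg_left hS hεΔ
  have heq2 : (ε / Δ) * (Δ * D - 1) = ε * D - ε / Δ := by
    field_simp
  have hεΔε : ε / Δ ≤ ε := div_le_self hε.le hΔ
  have hfinal : C (N + 1) ≤ ε := by
    have : C (N + 1) ≤ ε * D - (ε * D - ε / Δ) := by
      rw [← heq2]; linarith
    linarith
  exact absurd hfinal (not_le.mpr (hbig N le_rfl))
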